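/- Let V be a finite-dimensional real vector space with a symplectic (non-degenerate antisymmetric) bilinear form ω, and let G be a positive-definite symmetric bilinear form on V satisfying G(ξ,ξ)·G(η,η) ≥ ω(ξ,η)² for all ξ, η ∈ V. Then there exists a complex structure J on V (J² = −1) compatible with ω (i.e., ω(·, J·) is a positive-definite symmetric form and ω(Jξ,Jη)=ω(ξ,η)) such that G is J-invariant and the bilinear form ρ(ξ,η) := G(ξ,η) − ω(ξ,Jη) is symmetric and positive semidefinite. -/

import Mathlib

open RealInnerProductSpace Module

theorem aux_compatible_J {V : Type*} [NormedAddCommGroup V] [InnerProductSpace ℝ V]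
    [FiniteDimensional ℝ V]
    (ω : LinearMap.BilinForm ℝ V)
    (hω_alt : ∀ ξ, ω ξ ξ = 0)
    (hω_nd : ∀ ξ, ξ ≠ 0 → ∃ η, ω ξ η ≠ 0)
    (hGω : ∀ ξ η, (ω ξ η) ^ 2 ≤ ⟪ξ, ξ⟫ * ⟪η, η⟫) :
    ∃ J : V →ₗ[ℝ] V,
      J ∘ₗ J = -LinearMap.id ∧
      (∀ ξ η, ω ξ (J η) = ω η (J ξ)) ∧
      (∀ ξ, ξ ≠ 0 → 0 < ω ξ (J ξ)) ∧
      (∀ ξ η, ω (J ξ) (J η) = ω ξ η) ∧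
      (∀ ξ η, ⟪J ξ, J η⟫ = ⟪ξ, η⟫) ∧
      (∀ ξ, 0 ≤ ⟪ξ, ξ⟫ - ω ξ (J ξ)) := by
  have hpos : ∀ x : V, x ≠ 0 → 0 < ⟪x, x⟫ := by
    intro x hx
    rcases lt_or_eq_of_le (real_inner_self_nonneg (x := x)) with h | h
    · exact h
    · exact absurd ((@inner_self_eq_zero ℝ _ _ _ _ x).mp h.symm) hx
  have hω_anti : ∀ ξ η, ω ξ η = -ω η ξ := by
    intro ξ η
    have h := hω_alt (ξ + η)
    simp only [map_add, LinearMap.add_apply, hω_alt] at h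
    linarith
  set A : V →ₗ[ℝ] V :=
    (InnerProductSpace.toDual ℝ V).symm.toLinearMap ∘ₗ
      (LinearMap.toContinuousLinearMap : (V →ₗ[ℝ] ℝ) ≃ₗ[ℝ] (V →L[ℝ] ℝ)).toLinearMap ∘ₗ ω
    with hA_def
  have hA : ∀ ξ η, ⟪A ξ, η⟫ = ω ξ η := by
    intro ξ η
    simp [hA_def, InnerProductSpace.toDual_symm_apply]
  have hA_skew : ∀ ξ η, ⟪A ξ, η⟫ = -⟪ξ, A η⟫ := by
    intro ξ η
    rw [hA, hω_anti, real_inner_comm, hA]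
  have hA_ne : ∀ ξ, ξ ≠ 0 → A ξ ≠ 0 := by
    intro ξ hξ h0
    obtain ⟨η, hη⟩ := hω_nd ξ hξ
    apply hη
    rw [← hA, h0, inner_zero_left]
  have hA_contr : ∀ ξ, ⟪A ξ, A ξ⟫ ≤ ⟪ξ, ξ⟫ := by
    intro ξ
    have h1 := hGω ξ (A ξ)
    rw [← hA ξ (A ξ)] at h1
    rcases le_or_gt ⟪A ξ, A ξ⟫ 0 with h | h
    · exact h.trans real_inner_self_nonneg
    · nlinarith
  set T : V →ₗ[ℝ] V := -(A ∘ₗ A) with hT_def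
  have hT_apply : ∀ ξ, T ξ = -(A (A ξ)) := fun ξ => rfl
  have hT_inner : ∀ ξ η, ⟪T ξ, η⟫ = ⟪A ξ, A η⟫ := by
    intro ξ η
    have e : ⟪A (A ξ), η⟫ = -⟪A ξ, A η⟫ := hA_skew (A ξ) η
    rw [hT_apply, inner_neg_left, e, neg_neg]
  have hT_symm : (T : V →ₗ[ℝ] V).IsSymmetric := by
    intro ξ η
    rw [hT_inner, real_inner_comm, ← hT_inner, real_inner_comm]
  obtain ⟨n, hn⟩ : ∃ n, finrank ℝ V = n := ⟨_, rfl⟩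
  set b := hT_symm.eigenvectorBasis hn with hb_def
  set μ := hT_symm.eigenvalues hn with hμ_def
  have hTb : ∀ i, T (b i) = μ i • b i := fun i => hT_symm.apply_eigenvectorBasis hn i
  have hb_norm : ∀ i, ⟪b i, b i⟫ = 1 := by
    intro i
    rw [real_inner_self_eq_norm_sq, b.orthonormal.1 i]
    norm_num
  have hTbb : ∀ i, ⟪T (b i), b i⟫ = μ i := by
    intro i
    rw [hTb, real_inner_smul_left, hb_norm, mul_one]
  have hμ_pos : ∀ i, 0 < μ i := by
    intro i
    rw [← hTbb i, hT_inner]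
    exact hpos _ (hA_ne _ (b.toBasis.ne_zero i))
  have hμ_le : ∀ i, μ i ≤ 1 := by
    intro i
    have h2 := hA_contr (b i)
    rw [← hT_inner (b i) (b i), hTbb, hb_norm] at h2
    exact h2
  have hsqrt_pos : ∀ i, 0 < Real.sqrt (μ i) := fun i => Real.sqrt_pos.2 (hμ_pos i)
  have hsqrt_le : ∀ i, Real.sqrt (μ i) ≤ 1 := by
    intro i
    rw [show (1:ℝ) = Real.sqrt 1 by simp]
    exact Real.sqrt_le_sqrt (hμ_le i)
  set Q : V →ₗ[ℝ] V := b.toBasis.constr ℝ (fun i => (Real.sqrt (μ i))⁻¹ • b i) with hQ_def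
  have hQb : ∀ i, Q (b i) = (Real.sqrt (μ i))⁻¹ • b i := by
    intro i
    have := b.toBasis.constr_basis ℝ (fun i => (Real.sqrt (μ i))⁻¹ • b i) i
    rwa [OrthonormalBasis.coe_toBasis] at this
  have heig : ∀ (c : ℝ) (v : V), T v = c • v → Q v = (Real.sqrt c)⁻¹ • v := by
    intro c v hv
    have hrepr : ∀ i, μ i * b.repr v i = c * b.repr v i := by
      intro i
      have := hT_symm.eigenvectorBasis_apply_self_apply hn v i
      rw [hv, map_smul] at this
      simpa [mul_comm] using this.symm
    have hv1 := b.sum_repr v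
    calc Q v = Q (∑ i, b.repr v i • b i) := by rw [hv1]
      _ = ∑ i, b.repr v i • ((Real.sqrt (μ i))⁻¹ • b i) := by
          rw [map_sum]; exact Finset.sum_congr rfl fun i _ => by rw [map_smul, hQb]
      _ = ∑ i, b.repr v i • ((Real.sqrt c)⁻¹ • b i) := by
          apply Finset.sum_congr rfl
          intro i _
          rcases eq_or_ne (b.repr v i) 0 with h | h
          · simp [h]
          · rw [mul_right_cancel₀ h (hrepr i)]
      _ = (Real.sqrt c)⁻¹ • ∑ i, b.repr v i • b i := by
          rw [Finset.smul_sum]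
          exact Finset.sum_congr rfl fun i _ => smul_comm _ _ _
      _ = (Real.sqrt c)⁻¹ • v := by rw [hv1]
  have hTA : ∀ i, T (A (b i)) = μ i • A (b i) := by
    intro i
    have h2 : A (T (b i)) = μ i • A (b i) := by rw [hTb, map_smul]
    rw [hT_apply, map_neg] at h2
    rw [hT_apply]
    exact h2
  have hQA : ∀ v, Q (A v) = A (Q v) := by
    have h : Q ∘ₗ A = A ∘ₗ Q := by
      apply b.toBasis.ext
      intro i
      rw [OrthonormalBasis.coe_toBasis]
      simp only [LinearMap.comp_apply]
      rw [heig _ _ (hTA i), hQb, map_smul]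
    intro v
    exact LinearMap.congr_fun h v
  have hdiag : ∀ (c : Fin n → ℝ) (S : V →ₗ[ℝ] V), (∀ i, S (b i) = c i • b i) →
      ∀ x y, ⟪x, S y⟫ = ∑ i, c i * (b.repr x i * b.repr y i) := by
    intro c S hS x y
    calc ⟪x, S y⟫ = ⟪x, S (∑ i, b.repr y i • b i)⟫ := by rw [b.sum_repr y]
      _ = ∑ i, b.repr y i * (c i * ⟪x, b i⟫) := by
          rw [map_sum, inner_sum]
          exact Finset.sum_congr rfl fun i _ => by
            rw [map_smul, hS, real_inner_smul_right, real_inner_smul_right]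
      _ = ∑ i, c i * (b.repr x i * b.repr y i) := by
          apply Finset.sum_congr rfl
          intro i _
          rw [real_inner_comm, ← b.repr_apply_apply]
          ring
  have hQ_symm : ∀ x y, ⟪Q x, y⟫ = ⟪x, Q y⟫ := by
    intro x y
    rw [real_inner_comm y (Q x), hdiag _ Q hQb y x, hdiag _ Q hQb x y]
    exact Finset.sum_congr rfl fun i _ => by ring
  set J : V →ₗ[ℝ] V := A ∘ₗ Q with hJ_def
  have hJ_apply : ∀ v, J v = A (Q v) := fun v => rfl
  have hJ_skew : ∀ x y, ⟪J x, y⟫ = -⟪x, J y⟫ := by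
    intro x y
    rw [hJ_apply, hJ_apply, hA_skew, hQ_symm, hQA]
  have hJA : ∀ v, J (A v) = A (J v) := by
    intro v
    rw [hJ_apply, hJ_apply, hQA]
  have hAA : ∀ i, A (A (b i)) = -(μ i • b i) := by
    intro i
    have h := hTb i
    rw [hT_apply] at h
    rw [neg_eq_iff_eq_neg] at h
    exact h
  have hJJ : ∀ v, J (J v) = -v := by
    have h : ∀ i, J (J (b i)) = -(b i) := by
      intro i
      have s1 : J (b i) = (Real.sqrt (μ i))⁻¹ • A (b i) := by
        rw [hJ_apply, hQb, map_smul]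
      have s2 : Q (A (b i)) = (Real.sqrt (μ i))⁻¹ • A (b i) := heig _ _ (hTA i)
      rw [s1, map_smul, hJ_apply, s2, map_smul, hAA, smul_neg, smul_neg, smul_smul, smul_smul]
      have hc : (Real.sqrt (μ i))⁻¹ * (Real.sqrt (μ i))⁻¹ * μ i = 1 := by
        rw [← mul_inv, Real.mul_self_sqrt (hμ_pos i).le]
        exact inv_mul_cancel₀ (hμ_pos i).ne'
      rw [hc, one_smul]
    intro v
    have hc : J ∘ₗ J = -LinearMap.id := by
      apply b.toBasis.ext
      intro i
      rw [OrthonormalBasis.coe_toBasis]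
      simp only [LinearMap.comp_apply, LinearMap.neg_apply, LinearMap.id_apply]
      exact h i
    have := LinearMap.congr_fun hc v
    simpa using this
  have hTQb : ∀ i, (T ∘ₗ Q) (b i) = Real.sqrt (μ i) • b i := by
    intro i
    simp only [LinearMap.comp_apply]
    rw [hQb, map_smul, hTb, smul_smul, inv_mul_eq_div, Real.div_sqrt]
  have hωJ : ∀ ξ, ω ξ (J ξ) = ∑ i, Real.sqrt (μ i) * (b.repr ξ i * b.repr ξ i) := by
    intro ξ
    have h1 : ω ξ (J ξ) = ⟪ξ, T (Q ξ)⟫ := by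
      rw [← hA, hJ_apply, hA_skew, hT_apply]
      simp
    rw [h1, show T (Q ξ) = (T ∘ₗ Q) ξ from rfl, hdiag _ _ hTQb]
  refine ⟨J, ?_, ?_, ?_, ?_, ?_, ?_⟩
  · apply LinearMap.ext
    intro v
    simp only [LinearMap.comp_apply, LinearMap.neg_apply, LinearMap.id_apply]
    exact hJJ v
  · intro ξ η
    rw [← hA ξ (J η)]
    have e1 : ⟪A ξ, J η⟫ = -⟪J (A ξ), η⟫ := by rw [hJ_skew, neg_neg]
    rw [e1, hJA, hA, hω_anti (J ξ) η, neg_neg]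
  · intro ξ hξ
    rw [hωJ]
    have hξr : ∃ i, b.repr ξ i ≠ 0 := by
      by_contra h
      push_neg at h
      apply hξ
      have := b.sum_repr ξ
      simp only [h, zero_smul, Finset.sum_const_zero] at this
      exact this.symm
    obtain ⟨i, hi⟩ := hξr
    apply Finset.sum_pos'
    · intro j _
      exact mul_nonneg (hsqrt_pos j).le (mul_self_nonneg _)
    · exact ⟨i, Finset.mem_univ i, mul_pos (hsqrt_pos i) (mul_self_pos.mpr hi)⟩
  · intro ξ η
    have e1 : ω (J ξ) (J η) = ⟪A (J ξ), J η⟫ := (hA _ _).symm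
    have e2 : ⟪A (J ξ), J η⟫ = -⟪J ξ, A (J η)⟫ := hA_skew _ _
    have e3 : A (J η) = J (A η) := (hJA η).symm
    have e4 : ⟪J (J ξ), A η⟫ = -⟪J ξ, J (A η)⟫ := hJ_skew _ _
    have e5 : J (J ξ) = -ξ := hJJ ξ
    have e6 : ⟪(-ξ : V), A η⟫ = -⟪ξ, A η⟫ := inner_neg_left _ _
    have e7 : ⟪A ξ, η⟫ = -⟪ξ, A η⟫ := hA_skew _ _
    have e8 : ω ξ η = ⟪A ξ, η⟫ := (hA _ _).symm
    rw [e5] at e4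
    rw [e1, e2, e3, e8]
    linarith [e4, e6, e7]
  · intro ξ η
    have e4 : ⟪J (J ξ), J (J η)⟫ = -⟪J ξ, J (J (J η))⟫ := hJ_skew _ _
    have e5 : J (J ξ) = -ξ := hJJ ξ
    have e6 : J (J η) = -η := hJJ η
    rw [e5, e6] at e4
    have e7 : ⟪(-ξ : V), -η⟫ = ⟪ξ, η⟫ := by rw [inner_neg_left, inner_neg_right, neg_neg]
    have e8 : J (-η) = -(J η) := map_neg J η
    rw [e8] at e4
    have e9 : ⟪J ξ, -(J η)⟫ = -⟪J ξ, J η⟫ := inner_neg_right _ _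
    rw [e9] at e4
    rw [e7] at e4
    linarith
  · intro ξ
    rw [hωJ]
    have hid : ∀ i, (LinearMap.id : V →ₗ[ℝ] V) (b i) = (1:ℝ) • b i := by
      intro i; simp
    have h2 : ⟪ξ, ξ⟫ = ∑ i, (1:ℝ) * (b.repr ξ i * b.repr ξ i) := by
      have := hdiag (fun _ => 1) LinearMap.id hid ξ ξ
      simpa using this
    rw [h2, ← Finset.sum_sub_distrib]
    apply Finset.sum_nonneg
    intro i _
    have h3 : Real.sqrt (μ i) ≤ 1 := hsqrt_le i
    nlinarith [mul_self_nonneg (b.repr ξ i), (hsqrt_pos i).le]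




/-- If `G` is a positive-definite symmetric bilinear form on a finite-dimensional
symplectic vector space `(V, ω)` with `G(ξ,ξ)G(η,η) ≥ ω(ξ,η)²`, then there is a complex
structure `J` compatible with `ω` (i.e. `ω(·,J·)` is symmetric positive-definite and
`ω(Jξ,Jη) = ω(ξ,η)`) such that `G` is `J`-invariant and `ρ := G − ω(·,J·)` is symmetric
positive semidefinite. -/
theorem exists_compatible_complex_structure
    {V : Type*} [AddCommGroup V] [Module ℝ V] [FiniteDimensional ℝ V]
    (ω : LinearMap.BilinForm ℝ V)
    (hω_alt : ∀ ξ, ω ξ ξ = 0)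
    (hω_nd : ∀ ξ, ξ ≠ 0 → ∃ η, ω ξ η ≠ 0)
    (G : LinearMap.BilinForm ℝ V)
    (hG_symm : ∀ ξ η, G ξ η = G η ξ)
    (hG_pos : ∀ ξ, ξ ≠ 0 → 0 < G ξ ξ)
    (hGω : ∀ ξ η, (ω ξ η) ^ 2 ≤ G ξ ξ * G η η) :
    ∃ J : V →ₗ[ℝ] V,
      J ∘ₗ J = -LinearMap.id ∧
      (∀ ξ η, ω ξ (J η) = ω η (J ξ)) ∧
      (∀ ξ, ξ ≠ 0 → 0 < ω ξ (J ξ)) ∧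
      (∀ ξ η, ω (J ξ) (J η) = ω ξ η) ∧
      (∀ ξ η, G (J ξ) (J η) = G ξ η) ∧
      (∀ ξ η, G ξ η - ω ξ (J η) = G η ξ - ω η (J ξ)) ∧
      (∀ ξ, 0 ≤ G ξ ξ - ω ξ (J ξ)) := by
  letI c : InnerProductSpace.Core ℝ V :=
    { inner := fun x y => G x y
      conj_inner_symm := fun x y => by simpa using hG_symm y x
      re_inner_nonneg := fun x => by
        rcases eq_or_ne x 0 with h | h
        · simp [h]
        · simpa using (hG_pos x h).le
      add_left := fun x y z => by simp
      smul_left := fun x y r => by simp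
      definite := fun x hx => by
        by_contra h
        exact (hG_pos x h).ne' (by simpa using hx) }
  letI : NormedAddCommGroup V := c.toNormedAddCommGroup
  letI : InnerProductSpace ℝ V := InnerProductSpace.ofCore c.toCore
  have hfd : FiniteDimensional ℝ V := ‹_›
  have hinner : ∀ ξ η : V, @inner ℝ V _ ξ η = G ξ η := fun _ _ => rfl
  obtain ⟨J, h1, h2, h3, h4, h5, h6⟩ :=
    aux_compatible_J ω hω_alt hω_nd (fun ξ η => by rw [hinner, hinner]; exact hGω ξ η)
  refine ⟨J, h1, h2, h3, h4, ?_, ?_, ?_⟩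
  · intro ξ η
    rw [← hinner, ← hinner]
    exact h5 ξ η
  · intro ξ η
    rw [hG_symm ξ η, h2 ξ η]
  · intro ξ
    rw [← hinner]
    exact h6 ξ
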